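/- Let C ⊆ 2^{[n]} be a simplicial complex (a code closed under taking subsets, with ∅ ∈ C) and let d ≥ 0. Then C has a closed convex realization in ℝ^d if and only if C has an open convex realization in ℝ^d. (Consequently the closed and open embedding dimensions of a simplicial complex coincide.) -/

import Mathlib

/-- The combinatorial code of a collection of sets `U` in `X`: the set of
all `σ ⊆ [n]` such that some point `x ∈ X` lies in exactly the `U i` with `i ∈ σ`. -/
def codeOf {n : ℕ} {X : Type*} (U : Fin n → Set X) : Set (Finset (Fin n)) :=
  {σ | ∃ x : X, ∀ i, i ∈ σ ↔ x ∈ U i}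

/-- `C` has a realization by convex open sets in `ℝ^d`. -/
def HasOpenRealization (n : ℕ) (C : Set (Finset (Fin n))) (d : ℕ) : Prop :=
  ∃ U : Fin n → Set (EuclideanSpace ℝ (Fin d)),
    (∀ i, Convex ℝ (U i)) ∧ (∀ i, IsOpen (U i)) ∧ codeOf U = C

/-- `C` has a realization by convex closed sets in `ℝ^d`. -/
def HasClosedRealization (n : ℕ) (C : Set (Finset (Fin n))) (d : ℕ) : Prop :=
  ∃ U : Fin n → Set (EuclideanSpace ℝ (Fin d)),
    (∀ i, Convex ℝ (U i)) ∧ (∀ i, IsClosed (U i)) ∧ codeOf U = C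

/-- A finite family of positive reals has a positive lower bound. -/
lemma exists_pos_forall_le {ι : Type*} [Finite ι] (f : ι → ℝ) (hf : ∀ i, 0 < f i) :
    ∃ ε : ℝ, 0 < ε ∧ ∀ i, ε ≤ f i := by
  classical
  cases nonempty_fintype ι
  rcases isEmpty_or_nonempty ι with h | h
  · exact ⟨1, one_pos, fun i => (h.false i).elim⟩
  · obtain ⟨i0, -, hi0⟩ := Finset.exists_min_image Finset.univ f
      ⟨Classical.arbitrary ι, Finset.mem_univ _⟩
    exact ⟨f i0, hf i0, fun i => hi0 i (Finset.mem_univ i)⟩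

/-- If a finite family of compact sets has empty intersection over `σ`, then for some
`δ > 0` no point lies in the `δ`-thickening of every member. -/
lemma exists_pos_thickening_empty {X : Type*} [MetricSpace X] [ProperSpace X] [Nonempty X]
    {n : ℕ} (V : Fin n → Set X) (hVc : ∀ i, IsCompact (V i)) (σ : Finset (Fin n))
    (hempty : (⋂ i ∈ σ, V i) = ∅) :
    ∃ δ : ℝ, 0 < δ ∧ ∀ x : X, ∃ i ∈ σ, x ∉ Metric.thickening δ (V i) := by
  classical
  by_contra hcon
  push_neg at hcon
  have hpt : ∀ δ : ℝ, 0 < δ → ∃ x : X, ∀ i ∈ σ, x ∈ Metric.thickening δ (V i) := by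
    intro δ hδ
    obtain ⟨x, hx⟩ := hcon δ hδ
    exact ⟨x, hx⟩
  -- σ is nonempty, since the empty intersection over σ is `univ`.
  have hσ : σ.Nonempty := by
    rcases σ.eq_empty_or_nonempty with h | h
    · exfalso
      subst h
      simp only [Finset.notMem_empty, Set.iInter_of_empty, Set.iInter_univ] at hempty
      exact (Set.univ_nonempty).ne_empty hempty
    · exact h
  obtain ⟨i0, hi0⟩ := hσ
  set t : ℕ → Set X := fun k => ⋂ i ∈ σ, Metric.cthickening (1 / (k + 1)) (V i) with ht
  have hmono : ∀ k, t (k + 1) ⊆ t k := by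
    intro k
    apply Set.iInter₂_mono
    intro i _
    apply Metric.cthickening_mono
    apply one_div_le_one_div_of_le
    · positivity
    · push_cast; linarith
  have htn : ∀ k, (t k).Nonempty := by
    intro k
    obtain ⟨x, hx⟩ := hpt (1 / (k + 1)) (by positivity)
    exact ⟨x, Set.mem_iInter₂.2 fun i hi =>
      Metric.thickening_subset_cthickening _ _ (hx i hi)⟩
  have htcl : ∀ k, IsClosed (t k) := fun k =>
    isClosed_biInter fun i _ => Metric.isClosed_cthickening
  have ht0 : IsCompact (t 0) := by
    have hsub : t 0 ⊆ Metric.cthickening (1 / ((0 : ℕ) + 1)) (V i0) :=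
      fun x hx => Set.mem_iInter₂.1 hx i0 hi0
    exact ((hVc i0).cthickening).of_isClosed_subset (htcl 0) hsub
  obtain ⟨x, hx⟩ := IsCompact.nonempty_iInter_of_sequence_nonempty_isCompact_isClosed
    t hmono htn ht0 htcl
  have hxV : ∀ i ∈ σ, x ∈ V i := by
    intro i hi
    have hxc : x ∈ closure (V i) := by
      rw [Metric.closure_eq_iInter_cthickening]
      refine Set.mem_iInter₂.2 fun δ hδ => ?_
      obtain ⟨k, hk⟩ := exists_nat_gt (1 / δ)
      have hk1 : (1 : ℝ) / (k + 1) ≤ δ := by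
        rw [div_le_iff₀ (by positivity)]
        rw [div_lt_iff₀ hδ] at hk
        nlinarith
      have hxk : x ∈ t k := Set.mem_iInter.1 hx k
      exact Metric.cthickening_mono hk1 (V i)
        (Set.mem_iInter₂.1 hxk i hi)
    rwa [(hVc i).isClosed.closure_eq] at hxc
  have : x ∈ (⋂ i ∈ σ, V i) := Set.mem_iInter₂.2 hxV
  rw [hempty] at this
  exact this

/-- For a simplicial complex (a code closed under taking subsets, containing `∅`),
a closed convex realization in `ℝ^d` exists iff an open convex realization in `ℝ^d` exists. -/
theorem simplicialComplex_closed_iff_open {n d : ℕ} (C : Set (Finset (Fin n)))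
    (hempty : ∅ ∈ C) (hsimp : ∀ c ∈ C, ∀ τ ⊆ c, τ ∈ C) :
    HasClosedRealization n C d ↔ HasOpenRealization n C d := by
  classical
  set X := EuclideanSpace ℝ (Fin d) with hX
  constructor
  · -- closed ⇒ open
    rintro ⟨U, hconv, hclosed, hcode⟩
    -- witnesses for each codeword
    have hwit : ∀ σ : Finset (Fin n), ∃ x : X, σ ∈ C → ∀ i, i ∈ σ ↔ x ∈ U i := by
      intro σ
      by_cases h : σ ∈ C
      · rw [← hcode] at h
        obtain ⟨x, hx⟩ := h
        exact ⟨x, fun _ => hx⟩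
      · exact ⟨0, fun h' => absurd h' h⟩
    choose w hw using hwit
    -- a common bound for the witnesses
    obtain ⟨R, hR⟩ := Finite.exists_le fun σ : Finset (Fin n) => ‖w σ‖
    have hR0 : 0 ≤ R := le_trans (norm_nonneg _) (hR ∅)
    -- truncate to compact sets
    set V : Fin n → Set X := fun i => U i ∩ Metric.closedBall 0 R with hV
    have hVconv : ∀ i, Convex ℝ (V i) := fun i =>
      (hconv i).inter (convex_closedBall _ _)
    have hVcomp : ∀ i, IsCompact (V i) := fun i =>
      Metric.isCompact_of_isClosed_isBounded ((hclosed i).inter Metric.isClosed_closedBall)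
        (Metric.isBounded_closedBall.subset Set.inter_subset_right)
    have hwV : ∀ σ ∈ C, ∀ i, i ∈ σ ↔ w σ ∈ V i := by
      intro σ hσ i
      constructor
      · intro hi
        refine ⟨(hw σ hσ i).1 hi, ?_⟩
        rw [Metric.mem_closedBall, dist_zero_right]
        exact hR σ
      · intro hi
        exact (hw σ hσ i).2 hi.1
    have hVcode : codeOf V = C := by
      apply Set.eq_of_subset_of_subset
      · rintro σ ⟨x, hx⟩
        by_cases hxB : x ∈ Metric.closedBall (0 : X) R
        · have : σ ∈ codeOf U := by
            refine ⟨x, fun i => ?_⟩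
            rw [hx i]
            exact ⟨fun h => h.1, fun h => ⟨h, hxB⟩⟩
          rwa [hcode] at this
        · have : σ = ∅ := by
            ext i
            simp only [Finset.notMem_empty, iff_false]
            intro hi
            exact hxB ((hx i).1 hi).2
          rwa [this]
      · intro σ hσ
        exact ⟨w σ, hwV σ hσ⟩
    -- the nerve of V is C
    have hnerve : ∀ σ : Finset (Fin n), (∃ x : X, ∀ i ∈ σ, x ∈ V i) → σ ∈ C := by
      rintro σ ⟨x, hx⟩
      set τ : Finset (Fin n) := Finset.univ.filter (fun i => x ∈ V i) with hτ
      have hτC : τ ∈ C := by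
        rw [← hVcode]
        exact ⟨x, fun i => by simp [hτ]⟩
      exact hsimp τ hτC σ (fun i hi => by simp [hτ, hx i hi])
    have hVempty : ∀ σ : Finset (Fin n), σ ∉ C → (⋂ i ∈ σ, V i) = ∅ := by
      intro σ hσ
      rw [Set.eq_empty_iff_forall_notMem]
      intro x hx
      exact hσ (hnerve σ ⟨x, fun i hi => Set.mem_iInter₂.1 hx i hi⟩)
    -- choose positive separation constants
    have keyA : ∀ p : Finset (Fin n) × Fin n, ∃ δ : ℝ, 0 < δ ∧
        (p.1 ∈ C → p.2 ∉ p.1 → ∀ z ∈ V p.2, δ ≤ dist (w p.1) z) := by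
      rintro ⟨σ, j⟩
      by_cases hσ : σ ∈ C
      · by_cases hj : j ∉ σ
        · rcases (V j).eq_empty_or_nonempty with hVj | hVj
          · exact ⟨1, one_pos, fun _ _ z hz => by rw [hVj] at hz; exact hz.elim⟩
          · have hwj : w σ ∉ V j := fun h => hj ((hwV σ hσ j).2 h)
            have hpos : 0 < Metric.infDist (w σ) (V j) :=
              ((hVcomp j).isClosed.notMem_iff_infDist_pos hVj).1 hwj
            exact ⟨_, hpos, fun _ _ z hz => Metric.infDist_le_dist_of_mem hz⟩
        · exact ⟨1, one_pos, fun _ h => absurd h hj⟩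
      · exact ⟨1, one_pos, fun h => absurd h hσ⟩
    have keyB : ∀ σ : Finset (Fin n), ∃ δ : ℝ, 0 < δ ∧
        (σ ∉ C → ∀ x : X, ∃ i ∈ σ, x ∉ Metric.thickening δ (V i)) := by
      intro σ
      by_cases hσ : σ ∈ C
      · exact ⟨1, one_pos, fun h => absurd hσ h⟩
      · obtain ⟨δ, hδ, hδ'⟩ := exists_pos_thickening_empty V hVcomp σ (hVempty σ hσ)
        exact ⟨δ, hδ, fun _ => hδ'⟩
    choose δA hδA using keyA
    choose δB hδB using keyB
    obtain ⟨ε, hε, hεle⟩ := exists_pos_forall_le (Sum.elim δA δB)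
      (by rintro (p | σ); exacts [(hδA p).1, (hδB σ).1])
    have hεA : ∀ p, ε ≤ δA p := fun p => hεle (Sum.inl p)
    have hεB : ∀ σ, ε ≤ δB σ := fun σ => hεle (Sum.inr σ)
    refine ⟨fun i => Metric.thickening ε (V i), fun i => (hVconv i).thickening ε,
      fun i => Metric.isOpen_thickening, ?_⟩
    apply Set.eq_of_subset_of_subset
    · rintro σ ⟨x, hx⟩
      by_contra hσ
      obtain ⟨i, hi, hni⟩ := (hδB σ).2 hσ x
      exact hni (Metric.thickening_mono (hεB σ) (V i) ((hx i).1 hi))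
    · intro σ hσ
      refine ⟨w σ, fun i => ?_⟩
      constructor
      · intro hi
        exact Metric.self_subset_thickening hε (V i) ((hwV σ hσ i).1 hi)
      · intro hi
        by_contra hiσ
        obtain ⟨z, hz, hzd⟩ := Metric.mem_thickening_iff.1 hi
        have := le_trans (hεA (σ, i)) ((hδA (σ, i)).2 hσ hiσ z hz)
        linarith
  · -- open ⇒ closed
    rintro ⟨U, hconv, hopen, hcode⟩
    have hwit : ∀ σ : Finset (Fin n), ∃ x : X, σ ∈ C → ∀ i, i ∈ σ ↔ x ∈ U i := by
      intro σ
      by_cases h : σ ∈ C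
      · rw [← hcode] at h
        obtain ⟨x, hx⟩ := h
        exact ⟨x, fun _ => hx⟩
      · exact ⟨0, fun h' => absurd h' h⟩
    choose w hw using hwit
    have key : ∀ p : Finset (Fin n) × Fin n, ∃ δ : ℝ, 0 < δ ∧
        (p.1 ∈ C → p.2 ∈ p.1 → Metric.ball (w p.1) δ ⊆ U p.2) := by
      rintro ⟨σ, i⟩
      by_cases hσ : σ ∈ C
      · by_cases hi : i ∈ σ
        · obtain ⟨δ, hδ, hball⟩ := Metric.isOpen_iff.1 (hopen i) (w σ)
            ((hw σ hσ i).1 hi)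
          exact ⟨δ, hδ, fun _ _ => hball⟩
        · exact ⟨1, one_pos, fun _ h => absurd h hi⟩
      · exact ⟨1, one_pos, fun h => absurd h hσ⟩
    choose δ hδ using key
    obtain ⟨ε, hε, hεle⟩ := exists_pos_forall_le δ (fun p => (hδ p).1)
    set E : Fin n → Set X := fun i => {x | Metric.ball x ε ⊆ U i} with hE
    have hEU : ∀ i, E i ⊆ U i := fun i x hx =>
      hx (Metric.mem_ball_self hε)
    have hEclosed : ∀ i, IsClosed (E i) := by
      intro i
      rw [← isOpen_compl_iff, Metric.isOpen_iff]
      intro x hx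
      obtain ⟨y, hy, hyU⟩ := Set.not_subset.1 hx
      rw [Metric.mem_ball] at hy
      refine ⟨ε - dist y x, by linarith, fun z hz hsub => ?_⟩
      rw [Metric.mem_ball] at hz
      refine hyU (hsub ?_)
      rw [Metric.mem_ball]
      have h1 : dist y z ≤ dist y x + dist x z := dist_triangle _ _ _
      have h2 : dist x z = dist z x := dist_comm _ _
      linarith
    have hEconv : ∀ i, Convex ℝ (E i) := by
      intro i a ha b hb t s ht hs hts
      intro y hy
      rw [Metric.mem_ball, dist_eq_norm] at hy
      set v : X := y - (t • a + s • b) with hv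
      have hya : a + v ∈ Metric.ball a ε := by
        rw [Metric.mem_ball, dist_eq_norm]
        simpa using hy
      have hyb : b + v ∈ Metric.ball b ε := by
        rw [Metric.mem_ball, dist_eq_norm]
        simpa using hy
      have hcomb : y = t • (a + v) + s • (b + v) := by
        rw [hv, smul_add, smul_add]
        have : t • v + s • v = v := by
          rw [← add_smul, hts, one_smul]
        have hs' : s = 1 - t := by linarith
        subst hs'
        module
      rw [hcomb]
      exact hconv i (ha hya) (hb hyb) ht hs hts
    refine ⟨E, hEconv, hEclosed, ?_⟩
    apply Set.eq_of_subset_of_subset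
    · rintro σ ⟨x, hx⟩
      set τ : Finset (Fin n) := Finset.univ.filter (fun i => x ∈ U i) with hτ
      have hτC : τ ∈ C := by
        rw [← hcode]
        exact ⟨x, fun i => by simp [hτ]⟩
      refine hsimp τ hτC σ (fun i hi => ?_)
      simp only [hτ, Finset.mem_filter, Finset.mem_univ, true_and]
      exact hEU i ((hx i).1 hi)
    · intro σ hσ
      refine ⟨w σ, fun i => ?_⟩
      constructor
      · intro hi
        exact fun z hz => (hδ (σ, i)).2 hσ hi
          (Metric.ball_subset_ball (hεle (σ, i)) hz)
      · intro hi
        by_contra hiσ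
        exact hiσ ((hw σ hσ i).2 (hEU i hi))
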